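/- arXiv:2306.00168 — 2 statements merged into one kernel-verified Lean document; each statement's English description precedes it below -/
import Mathlib

section
/- Let SS, TT, ST be square-integrable random variables with Cov(SS, TT) = 0 and Var(SS) = Var(TT). Define IDD = SS − TT, SD = SS − ST, TD = TT − ST. Then Cov(TT, ST) > Cov(SS, ST) if and only if Cov(IDD, SD)² > Cov(IDD, TD)². -/
open MeasureTheory ProbabilityTheory

noncomputable def cov {Ω : Type*} [MeasurableSpace Ω] (μ : Measure Ω) (X Y : Ω → ℝ) : ℝ :=
  (∫ ω, X ω * Y ω ∂μ) - (∫ ω, X ω ∂μ) * (∫ ω, Y ω ∂μ)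

noncomputable def var {Ω : Type*} [MeasurableSpace Ω] (μ : Measure Ω) (X : Ω → ℝ) : ℝ :=
  cov μ X X

lemma int_mul {Ω : Type*} [MeasurableSpace Ω] {μ : Measure Ω} {X Y : Ω → ℝ}
    (hX : MemLp X 2 μ) (hY : MemLp Y 2 μ) : Integrable (fun ω => X ω * Y ω) μ := by
  have h : Integrable (fun ω => (((X ω + Y ω) ^ 2 - X ω ^ 2) - Y ω ^ 2) / 2) μ :=
    (((hX.add hY).integrable_sq.sub hX.integrable_sq).sub hY.integrable_sq).div_const 2
  convert h using 2 with ω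
  ring

lemma cov_expand {Ω : Type*} [MeasurableSpace Ω] {μ : Measure Ω} [IsFiniteMeasure μ] {X Y Z W : Ω → ℝ}
    (hX : MemLp X 2 μ) (hY : MemLp Y 2 μ) (hZ : MemLp Z 2 μ) (hW : MemLp W 2 μ) :
    cov μ (fun ω => X ω - Y ω) (fun ω => Z ω - W ω) =
      cov μ X Z - cov μ X W - cov μ Y Z + cov μ Y W := by
  have hXi := hX.integrable one_le_two
  have hYi := hY.integrable one_le_two
  have hZi := hZ.integrable one_le_two
  have hWi := hW.integrable one_le_two
  have i2 : Integrable (fun ω => X ω * Z ω - X ω * W ω) μ :=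
    (int_mul hX hZ).sub (int_mul hX hW)
  have i3 : Integrable (fun ω => X ω * Z ω - X ω * W ω - Y ω * Z ω) μ :=
    i2.sub (int_mul hY hZ)
  have h1 : (∫ ω, (X ω - Y ω) * (Z ω - W ω) ∂μ) =
      (∫ ω, X ω * Z ω ∂μ) - (∫ ω, X ω * W ω ∂μ) - (∫ ω, Y ω * Z ω ∂μ)
        + (∫ ω, Y ω * W ω ∂μ) := by
    rw [show (fun ω => (X ω - Y ω) * (Z ω - W ω)) =
        fun ω => X ω * Z ω - X ω * W ω - Y ω * Z ω + Y ω * W ω from funext fun ω => by ring,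
      integral_add i3 (int_mul hY hW), integral_sub i2 (int_mul hY hZ),
      integral_sub (int_mul hX hZ) (int_mul hX hW)]
  have h2 : (∫ ω, (X ω - Y ω) ∂μ) = (∫ ω, X ω ∂μ) - (∫ ω, Y ω ∂μ) := integral_sub hXi hYi
  have h3 : (∫ ω, (Z ω - W ω) ∂μ) = (∫ ω, Z ω ∂μ) - (∫ ω, W ω ∂μ) := integral_sub hZi hWi
  simp only [cov, h1, h2, h3]
  ring

theorem stmt5 {Ω : Type*} [MeasurableSpace Ω] (μ : Measure Ω) [IsProbabilityMeasure μ]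
    (SS TT ST : Ω → ℝ) (hSS : MemLp SS 2 μ) (hTT : MemLp TT 2 μ) (hST : MemLp ST 2 μ)
    (hcov : cov μ SS TT = 0) (hvar : var μ SS = var μ TT) (hpos : 0 < var μ SS) :
    cov μ TT ST > cov μ SS ST ↔
      (cov μ (fun ω => SS ω - TT ω) (fun ω => SS ω - ST ω)) ^ 2 >
      (cov μ (fun ω => SS ω - TT ω) (fun ω => TT ω - ST ω)) ^ 2 := by
  have hsym : cov μ TT SS = 0 := by
    rw [← hcov]; unfold cov; rw [mul_comm ((∫ ω, TT ω ∂μ))]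
    congr 1; congr 1; funext ω; ring
  rw [cov_expand hSS hTT hSS hST, cov_expand hSS hTT hTT hST, hcov, hsym]
  have hV : cov μ SS SS = var μ SS := rfl
  have hV2 : cov μ TT TT = var μ SS := by rw [hvar]; rfl
  rw [hV, hV2]
  set V := var μ SS
  set a := cov μ SS ST
  set b := cov μ TT ST
  constructor
  · intro h; nlinarith
  · intro h; nlinarith
end

section
/- Let SS, TT, ST be square-integrable random variables with E[SS] = E[TT], Var(SS) = Var(TT), and Cov(SS, TT) = 0. Define IDD = SS − TT, SD = SS − ST, TD = TT − ST. Then the following are equivalent: (1) Cov(TT, ST) > Cov(SS, ST); (2) Cov(IDD, SD)² > Cov(IDD, TD)²; (3) Var(SD) > Var(TD); (4) E[SD²] > E[TD²]. -/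
open MeasureTheory ProbabilityTheory

lemma my_integral_sub_mul_sub {Ω : Type*} [MeasurableSpace Ω] (μ : Measure Ω)
    {X Y Z W : Ω → ℝ} (hX : MemLp X 2 μ) (hY : MemLp Y 2 μ) (hZ : MemLp Z 2 μ)
    (hW : MemLp W 2 μ) :
    ∫ ω, (X ω - Y ω) * (Z ω - W ω) ∂μ =
      (∫ ω, X ω * Z ω ∂μ) - (∫ ω, X ω * W ω ∂μ) - (∫ ω, Y ω * Z ω ∂μ)
        + ∫ ω, Y ω * W ω ∂μ := by
  have key : ∀ {f g : Ω → ℝ}, MemLp f 2 μ → MemLp g 2 μ →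
      Integrable (fun ω => f ω * g ω) μ := by
    intro f g hf hg
    have h12 : (1 : ENNReal) / 1 = 1 / 2 + 1 / 2 := by
      rw [div_one, one_div, ENNReal.inv_two_add_inv_two]
    have := memLp_one_iff_integrable.mp (MemLp.smul (r := 1) hg hf)
    exact this
  have hXZ : Integrable (fun ω => X ω * Z ω) μ := key hX hZ
  have hXW : Integrable (fun ω => X ω * W ω) μ := key hX hW
  have hYZ : Integrable (fun ω => Y ω * Z ω) μ := key hY hZ
  have hYW : Integrable (fun ω => Y ω * W ω) μ := key hY hW
  have h12 : Integrable (fun ω => X ω * Z ω - X ω * W ω) μ := hXZ.sub hXW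
  have h123 : Integrable (fun ω => X ω * Z ω - X ω * W ω - Y ω * Z ω) μ := h12.sub hYZ
  have h : ∀ ω, (X ω - Y ω) * (Z ω - W ω)
      = X ω * Z ω - X ω * W ω - Y ω * Z ω + Y ω * W ω := fun ω => by ring
  simp_rw [h]
  rw [integral_add h123 hYW, integral_sub h12 hYZ, integral_sub hXZ hXW]

lemma my_cov_sub_sub {Ω : Type*} [MeasurableSpace Ω] (μ : Measure Ω) [IsFiniteMeasure μ]
    {X Y Z W : Ω → ℝ} (hX : MemLp X 2 μ) (hY : MemLp Y 2 μ) (hZ : MemLp Z 2 μ)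
    (hW : MemLp W 2 μ) :
    cov μ (fun ω => X ω - Y ω) (fun ω => Z ω - W ω)
      = cov μ X Z - cov μ X W - cov μ Y Z + cov μ Y W := by
  unfold cov
  rw [my_integral_sub_mul_sub μ hX hY hZ hW,
    integral_sub (hX.integrable one_le_two) (hY.integrable one_le_two),
    integral_sub (hZ.integrable one_le_two) (hW.integrable one_le_two)]
  ring

lemma my_cov_comm {Ω : Type*} [MeasurableSpace Ω] (μ : Measure Ω) (X Y : Ω → ℝ) :
    cov μ X Y = cov μ Y X := by
  unfold cov
  simp_rw [mul_comm (X _) (Y _)]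
  ring

lemma my_integral_sq {Ω : Type*} [MeasurableSpace Ω] (μ : Measure Ω) (X : Ω → ℝ) :
    ∫ ω, (X ω) ^ 2 ∂μ = cov μ X X + (∫ ω, X ω ∂μ) ^ 2 := by
  unfold cov
  simp_rw [sq]
  ring

theorem stmt12 {Ω : Type*} [MeasurableSpace Ω] (μ : Measure Ω) [IsProbabilityMeasure μ]
    (SS TT ST : Ω → ℝ) (hSS : MemLp SS 2 μ) (hTT : MemLp TT 2 μ) (hST : MemLp ST 2 μ)
    (hE : ∫ ω, SS ω ∂μ = ∫ ω, TT ω ∂μ) (hvar : var μ SS = var μ TT)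
    (hpos : 0 < var μ SS) (hcov : cov μ SS TT = 0) :
    List.TFAE [
      cov μ TT ST > cov μ SS ST,
      (cov μ (fun ω => SS ω - TT ω) (fun ω => SS ω - ST ω)) ^ 2 >
        (cov μ (fun ω => SS ω - TT ω) (fun ω => TT ω - ST ω)) ^ 2,
      var μ (fun ω => SS ω - ST ω) > var μ (fun ω => TT ω - ST ω),
      (∫ ω, (SS ω - ST ω) ^ 2 ∂μ) > (∫ ω, (TT ω - ST ω) ^ 2 ∂μ)] := by
  set a := cov μ SS ST with ha
  set b := cov μ TT ST with hb
  have hTTSS : cov μ TT SS = 0 := by rw [my_cov_comm]; exact hcov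
  have hSTSS : cov μ ST SS = a := my_cov_comm μ ST SS
  have hSTTT : cov μ ST TT = b := my_cov_comm μ ST TT
  have hSSSS : cov μ SS SS = var μ SS := rfl
  have hTTTT : cov μ TT TT = var μ SS := by rw [hvar]; rfl
  have hSTST : cov μ ST ST = var μ ST := rfl
  have hc1 : cov μ (fun ω => SS ω - TT ω) (fun ω => SS ω - ST ω)
      = var μ SS - a + b := by
    rw [my_cov_sub_sub μ hSS hTT hSS hST, hTTSS, hSSSS]; ring
  have hc2 : cov μ (fun ω => SS ω - TT ω) (fun ω => TT ω - ST ω)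
      = -a - var μ SS + b := by
    rw [my_cov_sub_sub μ hSS hTT hTT hST, hcov, hTTTT]; ring
  have hv3 : var μ (fun ω => SS ω - ST ω) = var μ SS - 2 * a + var μ ST := by
    show cov μ _ _ = _
    rw [my_cov_sub_sub μ hSS hST hSS hST, hSSSS, hSTSS, hSTST]; ring
  have hv4 : var μ (fun ω => TT ω - ST ω) = var μ SS - 2 * b + var μ ST := by
    show cov μ _ _ = _
    rw [my_cov_sub_sub μ hTT hST hTT hST, hTTTT, hSTTT, hSTST]; ring
  have hmean : ∫ ω, (SS ω - ST ω) ∂μ = ∫ ω, (TT ω - ST ω) ∂μ := by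
    rw [integral_sub (hSS.integrable one_le_two) (hST.integrable one_le_two),
      integral_sub (hTT.integrable one_le_two) (hST.integrable one_le_two), hE]
  have hi3 : ∫ ω, (SS ω - ST ω) ^ 2 ∂μ
      = var μ (fun ω => SS ω - ST ω) + (∫ ω, (TT ω - ST ω) ∂μ) ^ 2 := by
    rw [my_integral_sq μ (fun ω => SS ω - ST ω), ← hmean]; rfl
  have hi4 : ∫ ω, (TT ω - ST ω) ^ 2 ∂μ
      = var μ (fun ω => TT ω - ST ω) + (∫ ω, (TT ω - ST ω) ∂μ) ^ 2 := by
    rw [my_integral_sq μ (fun ω => TT ω - ST ω)]; rfl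
  tfae_have 1 ↔ 2 := by
    rw [hc1, hc2]
    constructor
    · intro h; nlinarith
    · intro h; nlinarith
  tfae_have 1 ↔ 3 := by rw [hv3, hv4]; constructor <;> intro h <;> linarith
  tfae_have 3 ↔ 4 := by rw [hi3, hi4]; constructor <;> intro h <;> linarith
  tfae_finish
end
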